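/- Let θ > 0 and let (M_k)_{k≥2} be a sequence of independent random variables on a probability space with P(M_k = j) = ((k-1)/(θ+k-1)) · (θ/(θ+k-1))^j for all j ∈ ℕ₀, and set B_k = 1{M_k ≥ 1}. Then the series ∑_{k=2}^{∞} (M_k - B_k) converges almost surely to an almost surely finite limit; that is, the partial sums Δ(n) = ∑_{k=2}^{n} (M_k - B_k) converge almost surely as n → ∞. -/

import Mathlib

open MeasureTheory ProbabilityTheory Filter
open scoped ENNReal NNReal

/-- The real expected value bound for a single `k`. -/
lemma geom_tsum_bound (θ : ℝ) (hθ : 0 < θ) (k : ℕ) (hk : 2 ≤ k) :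
    ∑' j : ℕ, (((j : ℝ) - if 1 ≤ j then 1 else 0) *
      (((k : ℝ) - 1) / (θ + k - 1) * (θ / (θ + k - 1)) ^ j))
      = θ ^ 2 / ((θ + k - 1) * ((k : ℝ) - 1)) := by
  have hk2 : (2 : ℝ) ≤ (k : ℝ) := by exact_mod_cast hk
  set K : ℝ := (k : ℝ) - 1 with hKdef
  have hK : 1 ≤ K := by simp [hKdef]; linarith
  have hK0 : 0 < K := by linarith
  set D : ℝ := θ + k - 1 with hDdef
  have hDK : D = θ + K := by simp [hDdef, hKdef]; ring
  have hD0 : 0 < D := by rw [hDK]; linarith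
  set r : ℝ := θ / D with hrdef
  have hr0 : 0 ≤ r := by positivity
  have hr1 : r < 1 := by
    rw [hrdef, div_lt_one hD0, hDK]; linarith
  have hrn : ‖r‖ < 1 := by rwa [Real.norm_eq_abs, abs_of_nonneg hr0]
  have h1r : 1 - r = K / D := by
    rw [hrdef, hDK]; field_simp; ring
  -- summabilities
  have hs1 : Summable (fun j : ℕ => (j : ℝ) * r ^ j) := by
    have := summable_pow_mul_geometric_of_norm_lt_one 1 hrn
    simpa using this
  have hs2 : Summable (fun j : ℕ => (if 1 ≤ j then (1:ℝ) else 0) * r ^ j) := by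
    apply Summable.of_nonneg_of_le (fun j => by positivity)
      (fun j => ?_) (summable_geometric_of_lt_one hr0 hr1)
    split <;> simp [hr0, pow_nonneg]
  have ht1 : ∑' j : ℕ, (j : ℝ) * r ^ j = r / (1 - r) ^ 2 :=
    tsum_coe_mul_geometric_of_norm_lt_one hrn
  have ht2 : ∑' j : ℕ, (if 1 ≤ j then (1:ℝ) else 0) * r ^ j = r / (1 - r) := by
    rw [Summable.tsum_eq_zero_add hs2]
    simp only [Nat.cast_zero, pow_zero, mul_one]
    have : ∀ j : ℕ, (if 1 ≤ j + 1 then (1:ℝ) else 0) * r ^ (j+1) = r * r ^ j := by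
      intro j; simp [pow_succ]; ring
    rw [tsum_congr this, tsum_mul_left, tsum_geometric_of_lt_one hr0 hr1]
    simp [div_eq_mul_inv]
  -- rewrite the summand
  have hre : ∀ j : ℕ, ((j : ℝ) - if 1 ≤ j then 1 else 0) * (K / D * r ^ j)
      = K / D * ((j:ℝ) * r ^ j) - K / D * ((if 1 ≤ j then (1:ℝ) else 0) * r ^ j) := by
    intro j; ring
  calc ∑' j : ℕ, (((j : ℝ) - if 1 ≤ j then 1 else 0) * (K / D * r ^ j))
      = ∑' j : ℕ, (K / D * ((j:ℝ) * r ^ j) - K / D * ((if 1 ≤ j then (1:ℝ) else 0) * r ^ j)) :=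
        tsum_congr hre
    _ = K / D * (r / (1 - r) ^ 2) - K / D * (r / (1 - r)) := by
        rw [Summable.tsum_sub (hs1.mul_left _) (hs2.mul_left _),
          tsum_mul_left, tsum_mul_left, ht1, ht2]
    _ = θ ^ 2 / (D * K) := by
        rw [h1r, hrdef, hDK]
        field_simp
        ring

lemma geom_summand_nonneg (θ : ℝ) (hθ : 0 < θ) (k : ℕ) (hk : 2 ≤ k) (j : ℕ) :
    0 ≤ ((j : ℝ) - if 1 ≤ j then 1 else 0) *
      (((k : ℝ) - 1) / (θ + k - 1) * (θ / (θ + k - 1)) ^ j) := by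
  have hk2 : (2 : ℝ) ≤ (k : ℝ) := by exact_mod_cast hk
  have hD0 : 0 < θ + (k:ℝ) - 1 := by linarith
  have h1 : (0:ℝ) ≤ (j : ℝ) - if 1 ≤ j then 1 else 0 := by
    split
    · rename_i hj
      have : (1:ℝ) ≤ (j:ℝ) := by exact_mod_cast hj
      linarith
    · simp
  have hK0 : (0:ℝ) ≤ (k:ℝ) - 1 := by linarith
  have h2 : (0:ℝ) ≤ ((k : ℝ) - 1) / (θ + k - 1) * (θ / (θ + k - 1)) ^ j :=
    mul_nonneg (div_nonneg hK0 hD0.le) (pow_nonneg (div_nonneg hθ.le hD0.le) j)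
  exact mul_nonneg h1 h2

lemma geom_summable (θ : ℝ) (hθ : 0 < θ) (k : ℕ) (hk : 2 ≤ k) :
    Summable (fun j : ℕ => (((j : ℝ) - if 1 ≤ j then 1 else 0) *
      (((k : ℝ) - 1) / (θ + k - 1) * (θ / (θ + k - 1)) ^ j))) := by
  have hk2 : (2 : ℝ) ≤ (k : ℝ) := by exact_mod_cast hk
  have hD0 : 0 < θ + (k:ℝ) - 1 := by linarith
  set r : ℝ := θ / (θ + k - 1) with hrdef
  have hr0 : 0 ≤ r := by positivity
  have hr1 : r < 1 := by rw [hrdef, div_lt_one hD0]; linarith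
  have hrn : ‖r‖ < 1 := by rwa [Real.norm_eq_abs, abs_of_nonneg hr0]
  have hs1 : Summable (fun j : ℕ => (j : ℝ) * r ^ j) := by
    have := summable_pow_mul_geometric_of_norm_lt_one 1 hrn
    simpa using this
  have hs2 : Summable (fun j : ℕ => (if 1 ≤ j then (1:ℝ) else 0) * r ^ j) := by
    apply Summable.of_nonneg_of_le (fun j => by positivity)
      (fun j => ?_) (summable_geometric_of_lt_one hr0 hr1)
    split <;> simp [hr0, pow_nonneg]
  have := ((hs1.mul_left (((k : ℝ) - 1) / (θ + k - 1))).sub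
    (hs2.mul_left (((k : ℝ) - 1) / (θ + k - 1))))
  apply this.congr
  intro j; ring

lemma lintegral_bound {Ω : Type*} [MeasurableSpace Ω]
    (μ : Measure Ω) [IsProbabilityMeasure μ]
    (θ : ℝ) (hθ : 0 < θ) (k : ℕ) (hk : 2 ≤ k) (M : Ω → ℕ) (hM : Measurable M)
    (hlaw : ∀ j : ℕ, μ {ω | M ω = j} =
      ENNReal.ofReal (((k : ℝ) - 1) / (θ + k - 1) * (θ / (θ + k - 1)) ^ j)) :
    ∫⁻ ω, ((M ω - if 1 ≤ M ω then 1 else 0 : ℕ) : ℝ≥0∞) ∂μ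
      ≤ ENNReal.ofReal (θ ^ 2 / ((k : ℝ) - 1) ^ 2) := by
  have hk2 : (2 : ℝ) ≤ (k : ℝ) := by exact_mod_cast hk
  set h : ℕ → ℝ≥0∞ := fun j => ((j - if 1 ≤ j then 1 else 0 : ℕ) : ℝ≥0∞) with hhdef
  have key : ∫⁻ ω, h (M ω) ∂μ = ∑' j : ℕ, h j * μ {ω | M ω = j} := by
    rw [← lintegral_map (f := h) Measurable.of_discrete hM, lintegral_countable']
    refine tsum_congr fun j => ?_
    rw [Measure.map_apply hM (measurableSet_singleton j)]
    rfl
  have hval : ∀ j : ℕ, h j * μ {ω | M ω = j}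
      = ENNReal.ofReal (((j : ℝ) - if 1 ≤ j then 1 else 0) *
        (((k : ℝ) - 1) / (θ + k - 1) * (θ / (θ + k - 1)) ^ j)) := by
    intro j
    have h1 : (0:ℝ) ≤ (j : ℝ) - if 1 ≤ j then 1 else 0 := by
      split
      · rename_i hj
        have : (1:ℝ) ≤ (j:ℝ) := by exact_mod_cast hj
        linarith
      · simp
    have hj0 : h j = ENNReal.ofReal ((j : ℝ) - if 1 ≤ j then 1 else 0) := by
      rcases Nat.eq_zero_or_pos j with hj | hj
      · subst hj; simp [hhdef]
      · have hj' : 1 ≤ j := hj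
        simp only [hhdef, hj', if_pos]
        rw [← ENNReal.ofReal_natCast (j-1), Nat.cast_sub hj', Nat.cast_one]
    rw [hlaw j, hj0, ← ENNReal.ofReal_mul h1]
  have hsum : ∑' j : ℕ, h j * μ {ω | M ω = j}
      = ENNReal.ofReal (θ ^ 2 / ((θ + k - 1) * ((k : ℝ) - 1))) := by
    rw [tsum_congr hval, ← ENNReal.ofReal_tsum_of_nonneg
      (geom_summand_nonneg θ hθ k hk) (geom_summable θ hθ k hk),
      geom_tsum_bound θ hθ k hk]
  have : ∫⁻ ω, ((M ω - if 1 ≤ M ω then 1 else 0 : ℕ) : ℝ≥0∞) ∂μ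
      = ∫⁻ ω, h (M ω) ∂μ := rfl
  rw [this, key, hsum]
  apply ENNReal.ofReal_le_ofReal
  have hK0 : (0:ℝ) < (k:ℝ) - 1 := by linarith
  have hD0 : (0:ℝ) < θ + (k:ℝ) - 1 := by linarith
  rw [div_le_div_iff₀ (mul_pos hD0 hK0) (pow_pos hK0 2)]
  have hKD : ((k:ℝ)-1)^2 ≤ (θ+(k:ℝ)-1)*((k:ℝ)-1) := by nlinarith
  exact mul_le_mul_of_nonneg_left hKD (sq_nonneg θ)


/-- Almost sure convergence of the series `∑_{k≥2} (M_k - B_k)`, where the `M_k` are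
independent geometrics with success parameters `(k-1)/(θ+k-1)` and `B_k = 1{M_k ≥ 1}`:
the partial sums `Δ(n) = ∑_{k=2}^n (M_k - B_k)` converge almost surely to a finite limit. -/
theorem sites_sub_cycles_ae_converges {Ω : Type*} [MeasurableSpace Ω]
    (μ : Measure Ω) [IsProbabilityMeasure μ]
    (θ : ℝ) (hθ : 0 < θ)
    (M : ℕ → Ω → ℕ) (hmeas : ∀ k, Measurable (M k))
    (hindep : iIndepFun
      (fun k : {k : ℕ // 2 ≤ k} => M k.val) μ)
    (hlaw : ∀ k, 2 ≤ k → ∀ j : ℕ, μ {ω | M k ω = j} =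
      ENNReal.ofReal (((k : ℝ) - 1) / (θ + k - 1) * (θ / (θ + k - 1)) ^ j)) :
    ∀ᵐ ω ∂μ, ∃ c : ℝ,
      Tendsto
        (fun n : ℕ => ∑ k ∈ Finset.Icc 2 n,
          ((M k ω : ℝ) - if 1 ≤ M k ω then 1 else 0))
        atTop (nhds c) := by
  classical
  set N : ℕ → Ω → ℕ := fun k ω => M k ω - (if 1 ≤ M k ω then 1 else 0) with hNdef
  set g : ℕ → Ω → ℝ≥0∞ := fun k ω => if 2 ≤ k then ((N k ω : ℕ) : ℝ≥0∞) else 0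
    with hgdef
  have hg : ∀ k, Measurable (g k) := by
    intro k
    by_cases hk : 2 ≤ k
    · simp only [hgdef, hk, if_pos]
      exact (Measurable.of_discrete (f := fun n : ℕ => ((n : ℕ) : ℝ≥0∞))).comp
        ((Measurable.of_discrete (f := fun n : ℕ =>
          n - (if 1 ≤ n then 1 else 0))).comp (hmeas k))
    · simp only [hgdef, hk, if_neg, if_false]
      exact measurable_const
  -- the per-k integral bounds
  set B : ℕ → ℝ := fun k => if 2 ≤ k then θ ^ 2 / ((k : ℝ) - 1) ^ 2 else 0 with hBdef
  have hBnn : ∀ k, 0 ≤ B k := by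
    intro k; simp only [hBdef]; split
    · positivity
    · exact le_refl 0
  have hbound : ∀ k, ∫⁻ ω, g k ω ∂μ ≤ ENNReal.ofReal (B k) := by
    intro k
    by_cases hk : 2 ≤ k
    · simp only [hgdef, hBdef, hk, if_pos]
      exact lintegral_bound μ θ hθ k hk (M k) (hmeas k) (hlaw k hk)
    · simp [hgdef, hBdef, hk]
  have hBsum : Summable B := by
    rw [← summable_nat_add_iff 2]
    have heq : (fun n : ℕ => B (n + 2)) = fun n : ℕ => θ ^ 2 * (1 / ((n : ℝ) + 1) ^ 2) := by
      funext n
      have h2 : 2 ≤ n + 2 := by omega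
      simp only [hBdef, h2, if_pos]
      push_cast
      ring
    rw [heq]
    apply Summable.mul_left
    have := Real.summable_one_div_nat_pow.mpr (one_lt_two)
    have := (summable_nat_add_iff 1).mpr this
    apply this.congr
    intro n; push_cast; ring
  -- finiteness of the integral of the total sum
  have hFmeas : Measurable fun ω => ∑' k, g k ω := Measurable.ennreal_tsum hg
  have hInt : ∫⁻ ω, ∑' k, g k ω ∂μ ≠ ⊤ := by
    rw [lintegral_tsum (fun k => (hg k).aemeasurable)]
    have h1 : ∑' k, ∫⁻ ω, g k ω ∂μ ≤ ∑' k, ENNReal.ofReal (B k) :=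
      ENNReal.tsum_le_tsum hbound
    have h2 : ∑' k, ENNReal.ofReal (B k) = ENNReal.ofReal (∑' k, B k) :=
      (ENNReal.ofReal_tsum_of_nonneg hBnn hBsum).symm
    exact ne_top_of_le_ne_top (by rw [h2]; exact ENNReal.ofReal_ne_top) h1
  filter_upwards [ae_lt_top hFmeas hInt] with ω hω
  -- real-valued summability
  set s : ℕ → ℝ≥0 := fun k => if 2 ≤ k then (N k ω : ℝ≥0) else 0 with hsdef
  have hgs : ∀ k, g k ω = ((s k : ℝ≥0) : ℝ≥0∞) := by
    intro k
    by_cases hk : 2 ≤ k <;> simp [hgdef, hsdef, hk]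
  have hssum : Summable s := by
    rw [← ENNReal.tsum_coe_ne_top_iff_summable]
    rw [← tsum_congr hgs]
    exact hω.ne
  have hGsum : Summable (fun k => ((s k : ℝ))) := NNReal.summable_coe.mpr hssum
  refine ⟨∑' k, ((s k : ℝ)), ?_⟩
  have htend : Tendsto (fun n => ∑ k ∈ Finset.range n, ((s k : ℝ))) atTop
      (nhds (∑' k, ((s k : ℝ)))) := hGsum.hasSum.tendsto_sum_nat
  have htend' := htend.comp (tendsto_add_atTop_nat 1)
  apply htend'.congr
  intro n
  show ∑ k ∈ Finset.range (n + 1), ((s k : ℝ))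
      = ∑ k ∈ Finset.Icc 2 n, ((M k ω : ℝ) - if 1 ≤ M k ω then 1 else 0)
  have hsub : Finset.Icc 2 n ⊆ Finset.range (n + 1) := by
    intro k hk
    simp only [Finset.mem_Icc] at hk
    simp only [Finset.mem_range]
    omega
  have hzero : ∀ k ∈ Finset.range (n + 1), k ∉ Finset.Icc 2 n → ((s k : ℝ)) = 0 := by
    intro k hk1 hk2
    simp only [Finset.mem_range] at hk1
    simp only [Finset.mem_Icc] at hk2
    have h2 : ¬ 2 ≤ k := by omega
    simp [hsdef, h2]
  rw [← Finset.sum_subset (f := fun k => ((s k : ℝ))) hsub hzero]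
  apply Finset.sum_congr rfl
  intro k hk
  simp only [Finset.mem_Icc] at hk
  have hk2 : 2 ≤ k := hk.1
  simp only [hsdef, hk2, if_pos, NNReal.coe_natCast]
  by_cases hM : 1 ≤ M k ω
  · simp only [hNdef, hM, if_pos]
    push_cast [Nat.cast_sub hM]
    ring
  · have : M k ω = 0 := by omega
    simp [hNdef, this]
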